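/- Let V be a real vector space, let C ⊆ V be a nonempty convex cone (closed under addition and under multiplication by positive real scalars), and let f : C → ℝ be strictly positive and positively 1-homogeneous. Then f is concave on C if and only if log ∘ f is concave on C. -/

import Mathlib

/-- For a strictly positive, positively 1-homogeneous function on a convex cone, concavity
is equivalent to log-concavity. -/
theorem stmt14 (V : Type*) [AddCommGroup V] [Module ℝ V] (C : Set V) (hne : C.Nonempty)
    (hadd : ∀ x ∈ C, ∀ y ∈ C, x + y ∈ C)
    (hcone : ∀ x ∈ C, ∀ t : ℝ, 0 < t → t • x ∈ C)
    (f : V → ℝ) (hpos : ∀ x ∈ C, 0 < f x)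
    (hhom : ∀ x ∈ C, ∀ t : ℝ, 0 < t → f (t • x) = t * f x) :
    ConcaveOn ℝ C f ↔ ConcaveOn ℝ C (fun x => Real.log (f x)) := by
  have hconv : Convex ℝ C := by
    intro x hx y hy a b ha hb hab
    rcases ha.eq_or_lt with rfl | ha'
    · simpa [show b = 1 by linarith] using hy
    rcases hb.eq_or_lt with rfl | hb'
    · simpa [show a = 1 by linarith] using hx
    exact hadd _ (hcone x hx a ha') _ (hcone y hy b hb')
  constructor
  · intro h
    refine ⟨hconv, fun x hx y hy a b ha hb hab => ?_⟩
    have h1 : a * f x + b * f y ≤ f (a • x + b • y) := by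
      simpa [smul_eq_mul] using h.2 hx hy ha hb hab
    rcases ha.eq_or_lt with rfl | ha'
    · simp only [zero_smul, zero_add, zero_mul]
      rw [show b = 1 by linarith]; simp
    rcases hb.eq_or_lt with rfl | hb'
    · simp only [zero_smul, add_zero, zero_mul]
      rw [show a = 1 by linarith]; simp
    have hfx := hpos x hx
    have hfy := hpos y hy
    have h2 : a • Real.log (f x) + b • Real.log (f y) ≤ Real.log (a * f x + b * f y) := by
      have := strictConcaveOn_log_Ioi.concaveOn.2 (Set.mem_Ioi.2 hfx) (Set.mem_Ioi.2 hfy)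
        ha hb hab
      simpa [smul_eq_mul] using this
    calc a • Real.log (f x) + b • Real.log (f y) ≤ Real.log (a * f x + b * f y) := h2
      _ ≤ Real.log (f (a • x + b • y)) := Real.log_le_log (by positivity) h1
  · intro h
    -- superadditivity
    have hsup : ∀ x ∈ C, ∀ y ∈ C, f x + f y ≤ f (x + y) := by
      intro x hx y hy
      have hfx := hpos x hx
      have hfy := hpos y hy
      set s := f x + f y with hs
      have hspos : 0 < s := by positivity
      set a := f x / s with ha
      set b := f y / s with hb
      have ha' : 0 < a := by positivity
      have hb' : 0 < b := by positivity
      have hab : a + b = 1 := by rw [ha, hb, ← add_div]; exact div_self hspos.ne'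
      set u := (s / f x) • x with hu
      set v := (s / f y) • y with hv
      have huC : u ∈ C := hcone x hx _ (by positivity)
      have hvC : v ∈ C := hcone y hy _ (by positivity)
      have hfu : f u = s := by
        rw [hu, hhom x hx _ (by positivity)]; field_simp
      have hfv : f v = s := by
        rw [hv, hhom y hy _ (by positivity)]; field_simp
      have hcomb : a • u + b • v = x + y := by
        rw [hu, hv, smul_smul, smul_smul]
        have e1 : a * (s / f x) = 1 := by
          rw [ha, div_mul_div_comm, mul_comm (f x) s]; exact div_self (mul_pos hspos hfx).ne'
        have e2 : b * (s / f y) = 1 := by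
          rw [hb, div_mul_div_comm, mul_comm (f y) s]; exact div_self (mul_pos hspos hfy).ne'
        rw [e1, e2, one_smul, one_smul]
      have hlog : Real.log s ≤ Real.log (f (x + y)) := by
        have := h.2 huC hvC ha'.le hb'.le hab
        rw [hcomb] at this
        simpa [hfu, hfv, smul_eq_mul, ← add_mul, hab] using this
      have hxyC : x + y ∈ C := hadd x hx y hy
      exact (Real.log_le_log_iff hspos (hpos _ hxyC)).mp hlog
    refine ⟨hconv, fun x hx y hy a b ha hb hab => ?_⟩
    rcases ha.eq_or_lt with rfl | ha'
    · simp only [zero_smul, zero_add, smul_eq_mul, zero_mul]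
      rw [show b = 1 by linarith]; simp
    rcases hb.eq_or_lt with rfl | hb'
    · simp only [zero_smul, add_zero, smul_eq_mul, zero_mul]
      rw [show a = 1 by linarith]; simp
    have := hsup _ (hcone x hx a ha') _ (hcone y hy b hb')
    rw [hhom x hx a ha', hhom y hy b hb'] at this
    simpa [smul_eq_mul] using this
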